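/- arXiv:2305.01927 — 3 statements merged into one kernel-verified Lean document; each statement's English description precedes it below -/
import Mathlib

section
/- Let G be a finite threshold graph such that either χ(G) is not divisible by 3, or G is ω-unique (i.e., G contains exactly one clique of order ω(G)). Then the robust chromatic number of G equals ⌈χ(G)/3⌉. -/
open SimpleGraph

/-- A 1-selection on `G`: each vertex `v` selects (at most) one pair containing `v`;
deleting the selected pairs from the edge set removes at most one edge incident
to each vertex.  (Selecting a non-edge, e.g. the diagonal, deletes nothing at `v`.) -/
def IsOneSelection {V : Type*} (G : SimpleGraph V) (f : V → Sym2 V) : Prop :=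
  ∀ v : V, v ∈ f v

/-- The 1-removed graph `G_f`. -/
def oneRemoved {V : Type*} (G : SimpleGraph V) (f : V → Sym2 V) : SimpleGraph V :=
  G.deleteEdges (Set.range f)

/-- The chromatic number of `G` as a natural number. -/
noncomputable def chromNum {V : Type*} (G : SimpleGraph V) : ℕ :=
  sInf {n : ℕ | G.Colorable n}

/-- The robust chromatic number `χ₁(G)`: the minimum of `χ(G_f)` over all 1-selections. -/
noncomputable def robustChromNum {V : Type*} (G : SimpleGraph V) : ℕ :=
  sInf {m : ℕ | ∃ f : V → Sym2 V, IsOneSelection G f ∧ chromNum (oneRemoved G f) = m}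

/-- The robust clique number `ω₁(G)`: the minimum of `ω(G_f)` over all 1-selections. -/
noncomputable def robustCliqueNum {V : Type*} (G : SimpleGraph V) : ℕ :=
  sInf {m : ℕ | ∃ f : V → Sym2 V, IsOneSelection G f ∧ (oneRemoved G f).cliqueNum = m}

/-- A set of vertices is independent if no two of its elements are adjacent. -/
def IsIndepVxSet {V : Type*} (G : SimpleGraph V) (s : Set V) : Prop :=
  s.Pairwise fun a b => ¬ G.Adj a b

/-- The independence number of `G`. -/
noncomputable def indepNum {V : Type*} (G : SimpleGraph V) : ℕ :=
  sSup {n : ℕ | ∃ s : Finset V, IsIndepVxSet G ↑s ∧ s.card = n}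

/-- The robust independence number `α₁(G)`: the maximum of `α(G_f)` over all 1-selections. -/
noncomputable def robustIndepNum {V : Type*} (G : SimpleGraph V) : ℕ :=
  sSup {m : ℕ | ∃ f : V → Sym2 V, IsOneSelection G f ∧ _root_.indepNum (oneRemoved G f) = m}

/-- `U` is robust independent in `G` if some 1-selection makes it independent. -/
def IsRobustIndep {V : Type*} (G : SimpleGraph V) (U : Set V) : Prop :=
  ∃ f : V → Sym2 V, IsOneSelection G f ∧ IsIndepVxSet (oneRemoved G f) U

/-- Threshold graph. -/
def IsThresholdGraph {V : Type*} (G : SimpleGraph V) : Prop :=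
  ∃ (h : ℝ) (g : V → ℝ), ∀ x y : V, x ≠ y → (G.Adj x y ↔ g x + g y > h)

/-- `G` is ω-unique: it has exactly one clique of order `ω(G)`. -/
def IsOmegaUnique {V : Type*} (G : SimpleGraph V) : Prop :=
  ∃! s : Finset V, G.IsNClique G.cliqueNum s

/-- Split graph: vertex set partitions into a clique and an independent set. -/
def IsSplitGraph {V : Type*} (G : SimpleGraph V) : Prop :=
  ∃ A : Set V, G.IsClique A ∧ IsIndepVxSet G Aᶜ

/-- Chordal graph: no induced cycle of length greater than 3. -/
def IsChordalGraph {V : Type*} (G : SimpleGraph V) : Prop :=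
  ∀ n : ℕ, 4 ≤ n → ¬ ∃ φ : Fin n ↪ V,
    ∀ i j : Fin n, G.Adj (φ i) (φ j) ↔ (SimpleGraph.cycleGraph n).Adj i j

/-- Interval graph: vertices can be assigned nonempty closed real intervals so that
two distinct vertices are adjacent iff their intervals intersect. -/
def IsIntervalGraph {V : Type*} (G : SimpleGraph V) : Prop :=
  ∃ a b : V → ℝ, (∀ v, a v ≤ b v) ∧
    ∀ u v : V, u ≠ v →
      (G.Adj u v ↔ (Set.Icc (a u) (b u) ∩ Set.Icc (a v) (b v)).Nonempty)

/-- Unit interval graph: vertices can be labelled by reals so that two distinct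
vertices are adjacent iff their labels are at distance less than 1. -/
def IsUnitIntervalGraph {V : Type*} (G : SimpleGraph V) : Prop :=
  ∃ r : V → ℝ, ∀ u v : V, u ≠ v → (G.Adj u v ↔ |r u - r v| < 1)

/-- Quasi-unicyclic: every connected component contains at most one cycle,
i.e. any two cycles lying in the same component have the same edge set. -/
def QuasiUnicyclic {V : Type*} [DecidableEq V] (G : SimpleGraph V) : Prop :=
  ∀ (u v : V) (p : G.Walk u u) (q : G.Walk v v),
    p.IsCycle → q.IsCycle → G.Reachable u v →
      p.edges.toFinset = q.edges.toFinset

/-- The Kneser graph `KG(n,k)`. -/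
def kneserGraph (n k : ℕ) : SimpleGraph {s : Finset (Fin n) // s.card = k} where
  Adj a b := a ≠ b ∧ Disjoint a.1 b.1
  symm := by
    refine ⟨?_⟩
    intro a b hab
    exact ⟨hab.1.symm, hab.2.symm⟩
  loopless := by
    refine ⟨?_⟩
    intro a ha
    exact ha.1 rfl


section Aux

variable {V : Type} {n : ℕ}

/-- prefix of the sorted order as a finset -/
def prefFinset (e : Fin n ≃ V) (m : ℕ) (hm : m ≤ n) : Finset V :=
  Finset.univ.map ((Fin.castLEEmb hm).trans e.toEmbedding)

lemma card_prefFinset (e : Fin n ≃ V) (m : ℕ) (hm : m ≤ n) :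
    (prefFinset e m hm).card = m := by
  simp [prefFinset]

lemma mem_prefFinset (e : Fin n ≃ V) (m : ℕ) (hm : m ≤ n) (v : V) :
    v ∈ prefFinset e m hm ↔ (e.symm v).val < m := by
  simp only [prefFinset, Finset.mem_map, Finset.mem_univ, true_and,
    Function.Embedding.trans_apply, Equiv.coe_toEmbedding]
  constructor
  · rintro ⟨j, rfl⟩
    simp [Fin.castLEEmb]
  · intro hv
    refine ⟨⟨(e.symm v).val, hv⟩, ?_⟩
    have h5 : ((Fin.castLEEmb hm) ⟨(e.symm v).val, hv⟩ : Fin n) = e.symm v := by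
      ext; simp [Fin.castLEEmb]
    rw [h5]; simp

variable {G : SimpleGraph V} {g : V → ℝ} {h₀ : ℝ}

lemma shiftAdj (e : Fin n ≃ V)
    (hadj : ∀ x y : V, x ≠ y → (G.Adj x y ↔ g x + g y > h₀))
    (hmono : ∀ i j : Fin n, i ≤ j → g (e j) ≤ g (e i))
    {i j i' j' : Fin n} (h : G.Adj (e i) (e j)) (hi : i' ≤ i) (hj : j' ≤ j)
    (hne : i' ≠ j') : G.Adj (e i') (e j') := by
  have h1 := (hadj _ _ h.ne).mp h
  refine (hadj _ _ fun hc => hne (e.injective hc)).mpr ?_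
  have h2 := hmono _ _ hi
  have h3 := hmono _ _ hj
  linarith

lemma topAdj (e : Fin n ≃ V) [DecidableEq V]
    (hadj : ∀ x y : V, x ≠ y → (G.Adj x y ↔ g x + g y > h₀))
    (hmono : ∀ i j : Fin n, i ≤ j → g (e j) ≤ g (e i))
    {m : ℕ} {s : Finset V} (hc : G.IsNClique m s)
    {i j : Fin n} (hi : i.val < m) (hj : j.val < m) (hne : i ≠ j) :
    G.Adj (e i) (e j) := by
  classical
  set I : Finset (Fin n) := s.image e.symm with hI
  have hIcard : I.card = m := by
    rw [hI, Finset.card_image_of_injective _ e.symm.injective, hc.card_eq]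
  have hIadj : ∀ a ∈ I, ∀ b ∈ I, a ≠ b → G.Adj (e a) (e b) := by
    intro a ha b hb hab
    rw [hI, Finset.mem_image] at ha hb
    obtain ⟨u, hu, rfl⟩ := ha
    obtain ⟨v, hv, rfl⟩ := hb
    simp only [Equiv.apply_symm_apply]
    exact hc.isClique hu hv (fun hev => hab (by rw [hev]))
  have key : ∀ {a b : Fin n}, a < b → b.val < m → G.Adj (e a) (e b) := by
    intro a b hab hbm
    obtain ⟨y, hyI, hby⟩ : ∃ y ∈ I, b ≤ y := by
      by_contra hcon
      push_neg at hcon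
      have hsub : I ⊆ Finset.Iio b := fun x hx => Finset.mem_Iio.mpr (hcon x hx)
      have h4 := Finset.card_le_card hsub
      rw [hIcard, Fin.card_Iio] at h4
      omega
    obtain ⟨x, hxI, hax⟩ : ∃ x ∈ I.erase y, a ≤ x := by
      by_contra hcon
      push_neg at hcon
      have hsub : I.erase y ⊆ Finset.Iio a := fun z hz => Finset.mem_Iio.mpr (hcon z hz)
      have h4 := Finset.card_le_card hsub
      rw [Finset.card_erase_of_mem hyI, hIcard, Fin.card_Iio] at h4
      have h6 : a.val < b.val := hab
      omega
    have hxy : x ≠ y := Finset.ne_of_mem_erase hxI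
    exact shiftAdj e hadj hmono (hIadj x (Finset.mem_of_mem_erase hxI) y hyI hxy) hax hby hab.ne
  rcases lt_or_gt_of_ne hne with hlt | hgt
  · exact key hlt hj
  · exact (key hgt hi).symm

lemma fiber_le_three [DecidableEq V] {f : V → Sym2 V}
    (hsel : ∀ v : V, v ∈ f v) (F : Finset V)
    (hF : ∀ u ∈ F, ∀ v ∈ F, u ≠ v → s(u, v) ∈ Set.range f) : F.card ≤ 3 := by
  classical
  set φ : V × V → V := fun p =>
    if h : ∃ w, f w = s(p.1, p.2) then h.choose else p.1 with hφdef
  have hφ1 : ∀ p ∈ F.offDiag, φ p ∈ F ∧ f (φ p) = s(p.1, p.2) := by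
    intro p hp
    rw [Finset.mem_offDiag] at hp
    obtain ⟨h1, h2, h3⟩ := hp
    obtain ⟨w, hw⟩ := hF _ h1 _ h2 h3
    have hex : ∃ w, f w = s(p.1, p.2) := ⟨w, hw⟩
    have hspec := hex.choose_spec
    have hval : φ p = hex.choose := by rw [hφdef]; exact dif_pos hex
    rw [hval]
    refine ⟨?_, hspec⟩
    have hmem : hex.choose ∈ f hex.choose := hsel _
    rw [hspec] at hmem
    rcases Sym2.mem_iff.mp hmem with h | h <;> rw [h] <;> assumption
  have hcard : F.offDiag.card ≤ 2 * (F.offDiag.image φ).card := by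
    apply Finset.card_le_mul_card_image
    intro a ha
    obtain ⟨p₀, hp₀, hp₀a⟩ := Finset.mem_image.mp ha
    have hsub : {q ∈ F.offDiag | φ q = a} ⊆ {p₀, p₀.swap} := by
      intro q hq
      rw [Finset.mem_filter] at hq
      obtain ⟨hq1, hq2⟩ := hq
      have e1 : f a = s(q.1, q.2) := by rw [← hq2]; exact (hφ1 q hq1).2
      have e2 : f a = s(p₀.1, p₀.2) := by rw [← hp₀a]; exact (hφ1 p₀ hp₀).2
      have e3 : s(q.1, q.2) = s(p₀.1, p₀.2) := by rw [← e1, e2]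
      rw [Sym2.eq_iff] at e3
      rcases e3 with ⟨ha1, ha2⟩ | ⟨ha1, ha2⟩
      · have hq0 : q = p₀ := Prod.ext ha1 ha2
        simp [hq0]
      · have hq0 : q = p₀.swap := Prod.ext ha1 ha2
        simp [hq0]
    calc {q ∈ F.offDiag | φ q = a}.card ≤ ({p₀, p₀.swap} : Finset (V × V)).card :=
          Finset.card_le_card hsub
      _ ≤ 2 := Finset.card_insert_le _ _ |>.trans (by simp)
  have himg : (F.offDiag.image φ).card ≤ F.card := by
    apply Finset.card_le_card
    intro x hx
    obtain ⟨p, hp, rfl⟩ := Finset.mem_image.mp hx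
    exact (hφ1 p hp).1
  have hoff : F.offDiag.card = F.card * F.card - F.card := F.offDiag_card
  by_contra hcon
  push_neg at hcon
  have h4 : 4 ≤ F.card := hcon
  have h6 : F.card * 4 ≤ F.card * F.card := Nat.mul_le_mul_left _ h4
  generalize hq : F.card * F.card = Q at hoff h6
  omega

end Aux

def ptFun (om i : ℕ) : ℕ :=
  if om ≤ i then 3 * ((om + 2) / 3 - 1)
  else if i % 3 = 0 then (if i + 1 < om then i + 1 else i)
  else if i % 3 = 1 then (if i + 1 < om then i + 1 else i - 1)
  else i - 2

lemma ptFun_lt {om i n : ℕ} (hom : 1 ≤ om) (hn : om ≤ n) (hi : i < n) :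
    ptFun om i < n := by
  unfold ptFun; split_ifs <;> omega


/-- For a finite threshold graph `G` such that `3 ∤ χ(G)` or `G` is ω-unique,
`χ₁(G) = ⌈χ(G)/3⌉`. -/
theorem robustChromNum_of_threshold
    {V : Type} [Fintype V] [DecidableEq V] (G : SimpleGraph V)
    (hthr : IsThresholdGraph G) (h : ¬ (3 ∣ chromNum G) ∨ IsOmegaUnique G) :
    robustChromNum G = (chromNum G + 2) / 3 := by
  classical
  obtain ⟨h₀, g, hadj⟩ := hthr
  -- basic chromNum facts
  have chromNum_le : ∀ (H : SimpleGraph V) (m : ℕ), H.Colorable m → chromNum H ≤ m :=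
    fun H m hm => Nat.sInf_le hm
  have colorable_chromNum : ∀ H : SimpleGraph V, H.Colorable (chromNum H) := by
    intro H
    have hmemc : (Fintype.card V) ∈ {n : ℕ | H.Colorable n} := H.colorable_of_fintype
    exact Nat.sInf_mem ⟨_, hmemc⟩
  by_cases hV : IsEmpty V
  · -- empty case
    have hcz : ∀ H : SimpleGraph V, chromNum H = 0 := by
      intro H
      have : H.Colorable 0 := ⟨SimpleGraph.Coloring.mk (fun v => isEmptyElim v)
        (fun {u v} hA => isEmptyElim u)⟩
      exact Nat.le_zero.mp (chromNum_le H 0 this)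
    have hmem : (0 : ℕ) ∈ {m : ℕ | ∃ f : V → Sym2 V,
        IsOneSelection G f ∧ chromNum (oneRemoved G f) = m} :=
      ⟨fun v => isEmptyElim v, fun v => isEmptyElim v, hcz _⟩
    have h1 : robustChromNum G = 0 :=
      Nat.le_zero.mp (Nat.sInf_le hmem)
    rw [h1, hcz G]
  -- nonempty case
  haveI hVne : Nonempty V := not_isEmpty_iff.mp hV
  set n := Fintype.card V with hn
  set e₀ : Fin n ≃ V := (Fintype.equivFin V).symm with he₀
  set wg : Fin n → ℝ := fun i => -g (e₀ i) with hwg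
  set e : Fin n ≃ V := (Tuple.sort wg).trans e₀ with he
  have hmono : ∀ i j : Fin n, i ≤ j → g (e j) ≤ g (e i) := by
    intro i j hij
    have h1 := Tuple.monotone_sort wg hij
    simp only [Function.comp_apply, hwg] at h1
    have h2 : e i = e₀ (Tuple.sort wg i) := rfl
    have h3 : e j = e₀ (Tuple.sort wg j) := rfl
    rw [h2, h3]
    linarith
  set ω := G.cliqueNum with hω
  obtain ⟨K, hK⟩ := G.exists_isNClique_cliqueNum
  have hωn : ω ≤ n := by
    have h1 := Finset.card_le_univ K
    rw [hK.card_eq] at h1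
    simpa using h1
  have hω1 : 1 ≤ ω := by
    have hv : V := Classical.arbitrary V
    have h1 : G.IsClique (({hv} : Finset V) : Set V) := by
      simp [SimpleGraph.isClique_singleton]
    have h2 := h1.card_le_cliqueNum
    simpa using h2
  have hclT : ∀ i j : Fin n, i.val < ω → j.val < ω → i ≠ j → G.Adj (e i) (e j) :=
    fun i j hi hj hne => topAdj e hadj hmono hK hi hj hne
  have cliqueBound : ∀ (m : ℕ) (s : Finset V), G.IsNClique m s → m ≤ ω := by
    intro m s hs
    have h1 := hs.isClique.card_le_cliqueNum
    rw [hs.card_eq] at h1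
    exact h1
  have hprefclique : ∀ (m : ℕ) (hm : m ≤ ω),
      G.IsClique ((prefFinset e m (le_trans hm hωn)) : Set V) := by
    intro m hm u hu v hv huv
    rw [Finset.mem_coe, mem_prefFinset] at hu hv
    have hne : e.symm u ≠ e.symm v := fun hc => huv (by
      rw [← e.apply_symm_apply u, hc, e.apply_symm_apply])
    have h1 := hclT _ _ (lt_of_lt_of_le hu hm) (lt_of_lt_of_le hv hm) hne
    simpa using h1
  have hN1 : ∀ i j : Fin n, ω ≤ i.val → ω ≤ j.val + 1 → ¬ G.Adj (e i) (e j) := by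
    intro i j hi hj hA
    have hnotmem : e i ∉ prefFinset e ω hωn := by
      rw [mem_prefFinset]; simp; omega
    have hcard : (insert (e i) (prefFinset e ω hωn)).card = ω + 1 := by
      rw [Finset.card_insert_of_notMem hnotmem, card_prefFinset]
    have hclS : G.IsClique (((insert (e i) (prefFinset e ω hωn) : Finset V)) : Set V) := by
      intro u hu v hv huv
      simp only [Finset.coe_insert, Set.mem_insert_iff, Finset.mem_coe] at hu hv
      have haux : ∀ x : V, x ∈ prefFinset e ω hωn → G.Adj (e i) x := by
        intro x hx
        rw [mem_prefFinset] at hx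
        have hle : e.symm x ≤ j := by
          rw [Fin.le_def]; omega
        have hne : i ≠ e.symm x := by
          intro hc
          have : i.val = (e.symm x).val := by rw [hc]
          omega
        have h2 := shiftAdj e hadj hmono hA le_rfl hle hne
        simpa using h2
      rcases hu with rfl | hu <;> rcases hv with rfl | hv
      · exact absurd rfl huv
      · exact haux v hv
      · exact (haux u hu).symm
      · exact hprefclique ω le_rfl hu hv huv
    have := cliqueBound _ _ ⟨hclS, hcard⟩
    omega
  -- greedy coloring: chromNum G = ω
  set colf : Fin n → ℕ :=
    fun i => (Finset.univ.filter (fun j : Fin n => j < i ∧ G.Adj (e j) (e i))).card with hcolf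
  have colPrefix : ∀ i j : Fin n, j < i → G.Adj (e j) (e i) → j.val < colf i := by
    intro i j hj hA
    have hsub : Finset.Iic j ⊆
        Finset.univ.filter (fun j' : Fin n => j' < i ∧ G.Adj (e j') (e i)) := by
      intro j' hj'
      rw [Finset.mem_Iic] at hj'
      refine Finset.mem_filter.mpr ⟨Finset.mem_univ _, lt_of_le_of_lt hj' hj, ?_⟩
      exact shiftAdj e hadj hmono hA hj' le_rfl (ne_of_lt (lt_of_le_of_lt hj' hj))
    have h1 := Finset.card_le_card hsub
    rw [Fin.card_Iic] at h1
    have h2 : colf i = (Finset.univ.filter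
        (fun j' : Fin n => j' < i ∧ G.Adj (e j') (e i))).card := rfl
    omega
  have colSmall : ∀ i : Fin n, colf i ≤ i.val := by
    intro i
    have hsub : Finset.univ.filter (fun j : Fin n => j < i ∧ G.Adj (e j) (e i))
        ⊆ Finset.Iio i := by
      intro x hx
      exact Finset.mem_Iio.mpr (Finset.mem_filter.mp hx).2.1
    have h1 := Finset.card_le_card hsub
    rw [Fin.card_Iio] at h1
    exact h1
  have colBound : ∀ i : Fin n, colf i < ω := by
    intro i
    have hinot : e i ∉ (Finset.univ.filter
        (fun j : Fin n => j < i ∧ G.Adj (e j) (e i))).image e := by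
      rw [Finset.mem_image]
      rintro ⟨j, hj, hji⟩
      have h2 := (Finset.mem_filter.mp hj).2.1
      exact absurd (e.injective hji) (ne_of_lt h2)
    have hcard : (insert (e i) ((Finset.univ.filter
        (fun j : Fin n => j < i ∧ G.Adj (e j) (e i))).image e)).card = colf i + 1 := by
      rw [Finset.card_insert_of_notMem hinot,
        Finset.card_image_of_injective _ e.injective]
    have hclS : G.IsClique (((insert (e i) ((Finset.univ.filter
        (fun j : Fin n => j < i ∧ G.Adj (e j) (e i))).image e) : Finset V)) : Set V) := by
      intro u hu v hv huv
      simp only [Finset.coe_insert, Set.mem_insert_iff, Finset.mem_coe] at hu hv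
      have hmemadj : ∀ x : V, x ∈ (Finset.univ.filter
          (fun j : Fin n => j < i ∧ G.Adj (e j) (e i))).image e →
          (e.symm x < i ∧ G.Adj (e (e.symm x)) (e i)) := by
        intro x hx
        rw [Finset.mem_image] at hx
        obtain ⟨j, hj, rfl⟩ := hx
        rw [Equiv.symm_apply_apply]
        exact (Finset.mem_filter.mp hj).2
      rcases hu with rfl | hu <;> rcases hv with rfl | hv
      · exact absurd rfl huv
      · have h3 := hmemadj v hv
        have h4 : G.Adj (e i) (e (e.symm v)) := (h3.2).symm
        simpa using h4
      · have h3 := hmemadj u hu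
        have h4 : G.Adj (e (e.symm u)) (e i) := h3.2
        simpa using h4
      · have h3 := hmemadj u hu
        have h4 := hmemadj v hv
        have hne : e.symm u ≠ e.symm v := fun hc => huv (by
          rw [← e.apply_symm_apply u, hc, e.apply_symm_apply])
        have h5 := shiftAdj e hadj hmono h3.2 le_rfl (le_of_lt h4.1) hne
        simpa using h5
    have := cliqueBound _ _ ⟨hclS, hcard⟩
    omega
  have hcolor : G.Colorable ω := by
    refine ⟨SimpleGraph.Coloring.mk (fun v => (⟨colf (e.symm v), colBound _⟩ : Fin ω)) ?_⟩
    intro u v hA hEq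
    have hA' : G.Adj (e (e.symm u)) (e (e.symm v)) := by simpa using hA
    have hne : e.symm u ≠ e.symm v := fun hc => hA.ne (by
      rw [← e.apply_symm_apply u, hc, e.apply_symm_apply])
    have hEq' : colf (e.symm u) = colf (e.symm v) := by
      simpa using congrArg Fin.val hEq
    rcases lt_or_gt_of_ne hne with hlt | hgt
    · have h1 := colPrefix _ _ hlt hA'
      have h2 := colSmall (e.symm u)
      omega
    · have h1 := colPrefix _ _ hgt hA'.symm
      have h2 := colSmall (e.symm v)
      omega
  have hχle : chromNum G ≤ ω := chromNum_le _ _ hcolor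
  have hωχ : ω ≤ chromNum G := by
    obtain ⟨C⟩ := colorable_chromNum G
    have hinj : Set.InjOn C ((prefFinset e ω hωn) : Set V) := by
      intro u hu v hv hCuv
      by_contra hne
      exact C.valid (hprefclique ω le_rfl hu hv hne) hCuv
    have h1 := Finset.card_le_card_of_injOn C
      (fun a _ => Finset.mem_univ (C a)) hinj
    rw [card_prefFinset] at h1
    simpa using h1
  have hχω : chromNum G = ω := le_antisymm hχle hωχ
  set k := (ω + 2) / 3 with hk
  -- key nonadjacency
  have hkey : ∀ i j : Fin n, ω ≤ i.val → 3 * (k - 1) + 1 ≤ j.val → ¬ G.Adj (e i) (e j) := by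
    intro i j hi hj
    by_cases h3 : 3 ∣ ω
    · have hou : IsOmegaUnique G := by
        rcases h with hnd | hou
        · rw [hχω] at hnd; exact absurd h3 hnd
        · exact hou
      have hω3 : 3 ≤ ω := by omega
      intro hA
      have hωn1 : ω - 1 ≤ n := by omega
      have hnm : e i ∉ prefFinset e (ω-1) hωn1 := by
        rw [mem_prefFinset]; simp; omega
      have hS₁card : (insert (e i) (prefFinset e (ω-1) hωn1)).card = ω := by
        rw [Finset.card_insert_of_notMem hnm, card_prefFinset]; omega
      have hj' : ω - 2 ≤ j.val := by omega
      have hS₁cl : G.IsClique (((insert (e i) (prefFinset e (ω-1) hωn1) : Finset V)) : Set V) := by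
        intro u hu v hv huv
        simp only [Finset.coe_insert, Set.mem_insert_iff, Finset.mem_coe] at hu hv
        have haux : ∀ x : V, x ∈ prefFinset e (ω-1) hωn1 → G.Adj (e i) x := by
          intro x hx
          rw [mem_prefFinset] at hx
          have hle : e.symm x ≤ j := by rw [Fin.le_def]; omega
          have hne2 : i ≠ e.symm x := by
            intro hc
            have : i.val = (e.symm x).val := by rw [hc]
            omega
          have h2 := shiftAdj e hadj hmono hA le_rfl hle hne2
          simpa using h2
        rcases hu with rfl | hu <;> rcases hv with rfl | hv
        · exact absurd rfl huv
        · exact haux v hv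
        · exact (haux u hu).symm
        · have hsub : prefFinset e (ω-1) hωn1 ⊆ prefFinset e ω hωn := by
            intro x hx
            rw [mem_prefFinset] at hx ⊢
            omega
          exact hprefclique ω le_rfl (hsub hu) (hsub hv) huv
      obtain ⟨s₀, hs₀, huniq⟩ := hou
      have hQ1 : G.IsNClique G.cliqueNum (insert (e i) (prefFinset e (ω-1) hωn1)) := by
        rw [← hω]; exact ⟨hS₁cl, hS₁card⟩
      have hQ2 : G.IsNClique G.cliqueNum (prefFinset e ω hωn) := by
        rw [← hω]; exact ⟨hprefclique ω le_rfl, card_prefFinset e ω hωn⟩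
      have h12 : (insert (e i) (prefFinset e (ω-1) hωn1)) = prefFinset e ω hωn := by
        rw [huniq _ hQ1, huniq _ hQ2]
      have hmem2 : e ⟨ω-1, by omega⟩ ∈ prefFinset e ω hωn := by
        rw [mem_prefFinset]; simp; omega
      rw [← h12, Finset.mem_insert] at hmem2
      rcases hmem2 with hc | hc
      · have h5 := e.injective hc
        have h6 : ω - 1 = i.val := congrArg Fin.val h5
        omega
      · rw [mem_prefFinset] at hc
        simp only [Equiv.symm_apply_apply] at hc
        omega
    · have hj2 : ω ≤ j.val + 1 := by omega
      exact hN1 i j hi hj2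
  -- the selection
  have hfltaux : ∀ v : V, ptFun ω (e.symm v).val < n :=
    fun v => ptFun_lt hω1 hωn (e.symm v).isLt
  set fsel : V → Sym2 V := fun v => s(v, e ⟨ptFun ω (e.symm v).val, hfltaux v⟩) with hfsel
  have hsel : IsOneSelection G fsel := by
    intro v
    rw [hfsel]
    exact Sym2.mem_mk_left _ _
  have hrange : ∀ (i m : Fin n), ptFun ω i.val = m.val → s(e i, e m) ∈ Set.range fsel := by
    intro i m hm
    refine ⟨e i, ?_⟩
    rw [hfsel]
    show s(e i, e ⟨ptFun ω (e.symm (e i)).val, hfltaux (e i)⟩) = s(e i, e m)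
    have h1 : (⟨ptFun ω (e.symm (e i)).val, hfltaux (e i)⟩ : Fin n) = m := by
      apply Fin.ext
      show ptFun ω (e.symm (e i)).val = m.val
      rw [Equiv.symm_apply_apply]
      exact hm
    rw [h1]
  have hR1 : ∀ i j : Fin n, i.val < j.val → j.val < ω → i.val / 3 = j.val / 3 →
      s(e i, e j) ∈ Set.range fsel := by
    intro i j hij hjω hdiv
    have hcase : (i.val % 3 = 0 ∧ j.val = i.val + 1) ∨ (i.val % 3 = 1 ∧ j.val = i.val + 1)
        ∨ (i.val % 3 = 0 ∧ j.val = i.val + 2) := by omega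
    rcases hcase with ⟨hm, hj1⟩ | ⟨hm, hj1⟩ | ⟨hm, hj1⟩
    · exact hrange i j (by unfold ptFun; split_ifs <;> omega)
    · exact hrange i j (by unfold ptFun; split_ifs <;> omega)
    · have h2 := hrange j i (by unfold ptFun; split_ifs <;> omega)
      rwa [Sym2.eq_swap] at h2
  have hR2 : ∀ i : Fin n, ω ≤ i.val → ∀ m : Fin n, m.val = 3*(k-1) →
      s(e i, e m) ∈ Set.range fsel := by
    intro i hi m hm
    exact hrange i m (by unfold ptFun; split_ifs <;> omega)
  have hk1 : 1 ≤ k := by omega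
  set cF : V → Fin k := fun v => ⟨min ((e.symm v).val / 3) (k-1),
    lt_of_le_of_lt (min_le_right _ _) (by omega)⟩ with hcF
  have hvalid : ∀ {u v : V}, (oneRemoved G fsel).Adj u v → cF u ≠ cF v := by
    intro u v hA hEq
    have hA0 : G.Adj u v ∧ ¬ s(u, v) ∈ Set.range fsel := by
      have := hA
      unfold oneRemoved at this
      rw [SimpleGraph.deleteEdges_adj] at this
      exact this
    obtain ⟨hGA, hnr⟩ := hA0
    have hGA' : G.Adj (e (e.symm u)) (e (e.symm v)) := by simpa using hGA
    have hnr' : ¬ s(e (e.symm u), e (e.symm v)) ∈ Set.range fsel := by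
      simpa using hnr
    set i := e.symm u with hi0
    set j := e.symm v with hj0
    have hne : i ≠ j := fun hc => hGA.ne (by
      rw [← e.apply_symm_apply u, ← e.apply_symm_apply v, ← hi0, ← hj0, hc])
    have hEq' : min (i.val / 3) (k-1) = min (j.val / 3) (k-1) := by
      simpa [hcF] using congrArg Fin.val hEq
    rcases lt_or_ge i.val ω with hiω | hiω <;> rcases lt_or_ge j.val ω with hjω | hjω
    · -- both < ω
      have hi3 : i.val / 3 ≤ k - 1 := by omega
      have hj3 : j.val / 3 ≤ k - 1 := by omega
      rw [min_eq_left hi3, min_eq_left hj3] at hEq'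
      have hvne : i.val ≠ j.val := fun hc => hne (Fin.ext hc)
      rcases lt_or_gt_of_ne hvne with hlt | hgt
      · exact hnr' (hR1 i j hlt hjω hEq')
      · have h2 := hR1 j i hgt hiω hEq'.symm
        rw [Sym2.eq_swap] at h2
        exact hnr' h2
    · -- i < ω ≤ j
      have hi3 : i.val / 3 ≤ k - 1 := by omega
      have hj3 : k - 1 ≤ j.val / 3 := by omega
      rw [min_eq_left hi3, min_eq_right hj3] at hEq'
      have hige : 3 * (k-1) ≤ i.val := by omega
      rcases eq_or_lt_of_le hige with heq | hlt
      · have h2 := hR2 j hjω i heq.symm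
        rw [Sym2.eq_swap] at h2
        exact hnr' h2
      · exact hkey j i hjω (by omega) hGA'.symm
    · -- j < ω ≤ i
      have hj3 : j.val / 3 ≤ k - 1 := by omega
      have hi3 : k - 1 ≤ i.val / 3 := by omega
      rw [min_eq_right hi3, min_eq_left hj3] at hEq'
      have hjge : 3 * (k-1) ≤ j.val := by omega
      rcases eq_or_lt_of_le hjge with heq | hlt
      · exact hnr' (hR2 i hiω j heq.symm)
      · exact hkey i j hiω (by omega) hGA'
    · exact hN1 i j hiω (by omega) hGA'
  have hcolf2 : (oneRemoved G fsel).Colorable k := ⟨SimpleGraph.Coloring.mk cF hvalid⟩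
  -- lower bound
  have hlow : ∀ m ∈ {m : ℕ | ∃ f : V → Sym2 V,
      IsOneSelection G f ∧ chromNum (oneRemoved G f) = m}, k ≤ m := by
    rintro m ⟨f, hfsel1, rfl⟩
    obtain ⟨C⟩ := colorable_chromNum (oneRemoved G f)
    have hfibers : ∀ b ∈ (Finset.univ : Finset (Fin (chromNum (oneRemoved G f)))),
        ((prefFinset e ω hωn).filter (fun v => C v = b)).card ≤ 3 := by
      intro b _
      apply fiber_le_three hfsel1
      intro u hu v hv huv
      rw [Finset.mem_filter] at hu hv
      have hadjuv : G.Adj u v := hprefclique ω le_rfl hu.1 hv.1 huv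
      have hnadj : ¬ (oneRemoved G f).Adj u v := by
        intro hA2
        exact C.valid hA2 (hu.2.trans hv.2.symm)
      by_contra hnr
      apply hnadj
      unfold oneRemoved
      rw [SimpleGraph.deleteEdges_adj]
      exact ⟨hadjuv, hnr⟩
    have hcount := Finset.card_le_mul_card_image_of_maps_to
      (f := C) (t := (Finset.univ : Finset (Fin (chromNum (oneRemoved G f)))))
      (fun a _ => Finset.mem_univ _) 3 hfibers
    rw [card_prefFinset] at hcount
    simp only [Finset.card_univ, Fintype.card_fin] at hcount
    omega
  have hmem₀ : chromNum (oneRemoved G fsel) ∈ {m : ℕ | ∃ f : V → Sym2 V,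
      IsOneSelection G f ∧ chromNum (oneRemoved G f) = m} := ⟨fsel, hsel, rfl⟩
  have hrob : robustChromNum G = sInf {m : ℕ | ∃ f : V → Sym2 V,
      IsOneSelection G f ∧ chromNum (oneRemoved G f) = m} := rfl
  have hle1 : robustChromNum G ≤ k := by
    rw [hrob]
    exact le_trans (Nat.sInf_le hmem₀) (chromNum_le _ _ hcolf2)
  have hle2 : k ≤ robustChromNum G := by
    rw [hrob]
    exact le_csInf ⟨_, hmem₀⟩ hlow
  rw [hχω]
  omega
end

section
/- Let k ≥ 2 be an integer, let n ≥ 2k, and let c be an integer with 2k ≤ c ≤ n such that n − c ≥ C(c, k) − C(2k, k). Then χ₁(KG(n, k)) ≤ n − c + 1. -/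
open SimpleGraph

/-- If `k ≥ 2`, `n ≥ 2k`, and `2k ≤ c ≤ n` with
`n - c ≥ C(c,k) - C(2k,k)`, then `χ₁(KG(n,k)) ≤ n - c + 1`. -/
theorem robustChromNum_kneserGraph_le (k n c : ℕ) (hk : 2 ≤ k) (hn : 2 * k ≤ n)
    (hc1 : 2 * k ≤ c) (hc2 : c ≤ n)
    (h : c.choose k - (2 * k).choose k ≤ n - c) :
    robustChromNum (kneserGraph n k) ≤ n - c + 1 := by
  classical
  set V := {s : Finset (Fin n) // s.card = k} with hV
  set t := n - c with ht
  have hk0 : 0 < k := by omega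
  have htn : t + 2 * k ≤ n := by omega
  -- the "high" interval I (last c coordinates) and the fixed 2k-set D
  have hIlt : ∀ m ∈ Finset.Ico t n, m < n := fun m hm => (Finset.mem_Ico.mp hm).2
  set I : Finset (Fin n) := (Finset.Ico t n).attachFin hIlt with hI
  have hDlt : ∀ m ∈ Finset.Ico t (t + 2 * k), m < n :=
    fun m hm => lt_of_lt_of_le (Finset.mem_Ico.mp hm).2 htn
  set D : Finset (Fin n) := (Finset.Ico t (t + 2 * k)).attachFin hDlt with hD
  have hmemI : ∀ x : Fin n, x ∈ I ↔ t ≤ (x : ℕ) := by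
    intro x
    simp [hI, Finset.mem_attachFin, Finset.mem_Ico, x.isLt]
  have hmemD : ∀ x : Fin n, x ∈ D ↔ t ≤ (x : ℕ) ∧ (x : ℕ) < t + 2 * k := by
    intro x
    simp [hD, Finset.mem_attachFin, Finset.mem_Ico]
  have hDcard : D.card = 2 * k := by
    rw [hD, Finset.card_attachFin, Nat.card_Ico]; omega
  have hIcard : I.card = c := by
    rw [hI, Finset.card_attachFin, Nat.card_Ico]; omega
  have hDI : D ⊆ I := by
    intro x hx
    rw [hmemI]; exact ((hmemD x).mp hx).1
  -- each vertex is a nonempty finset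
  have hvne : ∀ T : V, T.1.Nonempty := by
    intro T
    exact Finset.card_pos.mp (by rw [T.2]; omega)
  -- the "exceptional" vertices: k-subsets of I not inside D
  set R : Finset V := Finset.univ.filter (fun S : V => S.1 ⊆ I ∧ ¬ S.1 ⊆ D) with hR
  have hmemR : ∀ S : V, S ∈ R ↔ (S.1 ⊆ I ∧ ¬ S.1 ⊆ D) := by
    intro S; simp [hR]
  have hRcard : R.card ≤ t := by
    have h1 : R.card ≤ ((Finset.powersetCard k I) \ (Finset.powersetCard k D)).card := by
      apply Finset.card_le_card_of_injOn (fun S => S.1)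
      · intro S hS
        rw [Finset.mem_coe, hmemR] at hS
        rw [Finset.mem_coe, Finset.mem_sdiff, Finset.mem_powersetCard, Finset.mem_powersetCard]
        exact ⟨⟨hS.1, S.2⟩, fun hc => hS.2 hc.1⟩
      · intro a _ b _ hab
        exact Subtype.ext hab
    have h2 : ((Finset.powersetCard k I) \ (Finset.powersetCard k D)).card
        = c.choose k - (2 * k).choose k := by
      rw [Finset.card_sdiff_of_subset (Finset.powersetCard_mono hDI),
        Finset.card_powersetCard, Finset.card_powersetCard, hDcard, hIcard]
    omega
  -- the injection of R into the first t colors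
  have hgex : Nonempty (↥R ↪ Fin t) := by
    apply Function.Embedding.nonempty_of_card_le
    rwa [Fintype.card_coe, Fintype.card_fin]
  obtain ⟨g⟩ := hgex
  -- the partner of a vertex inside D
  have hpartner : ∀ T : V, T.1 ⊆ D → (D \ T.1).card = k := by
    intro T hTD
    rw [Finset.card_sdiff_of_subset hTD, hDcard, T.2]; omega
  -- the 1-selection
  set f : V → Sym2 V := fun T =>
    if hHi : T.1 ⊆ I then
      (if hTD : T.1 ⊆ D then s(T, ⟨D \ T.1, hpartner T hTD⟩) else s(T, T))
    else
      (if hS : ∃ S : ↥R, ((g S : Fin t) : ℕ) = ((T.1.min' (hvne T) : Fin n) : ℕ) then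
        s(T, (Classical.choose hS).1) else s(T, T)) with hf
  have hsel : IsOneSelection (kneserGraph n k) f := by
    intro T
    rw [hf]
    dsimp only
    split_ifs <;> exact Sym2.mem_mk_left _ _
  -- the coloring
  set col : V → Fin (t + 1) := fun T =>
    if hHi : T.1 ⊆ I then
      (if hTD : T.1 ⊆ D then ⟨t, Nat.lt_succ_self t⟩
       else ⟨((g ⟨T, (hmemR T).mpr ⟨hHi, hTD⟩⟩ : Fin t) : ℕ),
         Nat.lt_succ_of_lt (g ⟨T, (hmemR T).mpr ⟨hHi, hTD⟩⟩).isLt⟩)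
    else ⟨((T.1.min' (hvne T) : Fin n) : ℕ), by
      obtain ⟨x, hx, hxI⟩ := Finset.not_subset.mp hHi
      have h1 : (x : ℕ) < t := by
        by_contra hcon
        exact hxI ((hmemI x).mpr (by omega))
      have h2 := Finset.min'_le T.1 x hx
      have h3 : ((T.1.min' (hvne T) : Fin n) : ℕ) ≤ (x : ℕ) := h2
      omega⟩ with hcol
  -- validity of the coloring on the 1-removed graph
  have hvalid : ∀ a b : V, (oneRemoved (kneserGraph n k) f).Adj a b → col a ≠ col b := by
    intro a b hadj heq
    rw [oneRemoved, SimpleGraph.deleteEdges_adj] at hadj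
    obtain ⟨hAdj, hrem⟩ := hadj
    obtain ⟨hne', hdisj⟩ : a ≠ b ∧ Disjoint a.1 b.1 := hAdj
    simp only [hcol] at heq
    split_ifs at heq with h1 h2 h3 h4 h5 h6 h7 h8 h9 h10
    -- case 1 : a ⊆ I, a ⊆ D, b ⊆ I, b ⊆ D
    · have hb : b = (⟨D \ a.1, hpartner a h2⟩ : V) := by
        apply Subtype.ext
        apply Finset.eq_of_subset_of_card_le
        · intro x hx
          rw [Finset.mem_sdiff]
          exact ⟨h4 hx, fun hxa => (Finset.disjoint_left.mp hdisj hxa) hx⟩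
        · rw [hpartner a h2, b.2]
      refine hrem ⟨a, ?_⟩
      simp only [hf]
      rw [dif_pos h1, dif_pos h2, hb]
    -- case 2 : a ⊆ I, a ⊆ D, b ⊆ I, ¬ b ⊆ D
    · have := congrArg Fin.val heq
      simp only at this
      have hlt := (g ⟨b, (hmemR b).mpr ⟨h3, h4⟩⟩).isLt
      omega
    -- case 3 : a ⊆ I, a ⊆ D, ¬ b ⊆ I
    · have := congrArg Fin.val heq
      simp only at this
      obtain ⟨x, hx, hxI⟩ := Finset.not_subset.mp h3
      have hxt : (x : ℕ) < t := by
        by_contra hcon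
        exact hxI ((hmemI x).mpr (by omega))
      have hmle : ((b.1.min' (hvne b) : Fin n) : ℕ) ≤ (x : ℕ) :=
        Finset.min'_le b.1 x hx
      omega
    -- case 4 : a ⊆ I, ¬ a ⊆ D, b ⊆ I, b ⊆ D
    · have := congrArg Fin.val heq
      simp only at this
      have hlt := (g ⟨a, (hmemR a).mpr ⟨h1, h2⟩⟩).isLt
      omega
    -- case 5 : a ⊆ I, ¬ a ⊆ D, b ⊆ I, ¬ b ⊆ D
    · have hvv := congrArg Fin.val heq
      simp only at hvv
      have hgg : g ⟨a, (hmemR a).mpr ⟨h1, h2⟩⟩ = g ⟨b, (hmemR b).mpr ⟨h5, h6⟩⟩ :=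
        Fin.val_injective hvv
      have := g.injective hgg
      exact hne' (congrArg Subtype.val this)
    -- case 6 : a ⊆ I, ¬ a ⊆ D, ¬ b ⊆ I
    · have hvv := congrArg Fin.val heq
      simp only at hvv
      have haR : a ∈ R := (hmemR a).mpr ⟨h1, h2⟩
      have hS : ∃ S : ↥R, ((g S : Fin t) : ℕ) = ((b.1.min' (hvne b) : Fin n) : ℕ) :=
        ⟨⟨a, haR⟩, hvv⟩
      have hchoose : (Classical.choose hS).1 = a := by
        have hspec := Classical.choose_spec hS
        have : g (Classical.choose hS) = g ⟨a, haR⟩ :=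
          Fin.val_injective (by rw [hspec, hvv])
        exact congrArg Subtype.val (g.injective this)
      refine hrem ⟨b, ?_⟩
      simp only [hf]
      rw [dif_neg h5, dif_pos hS, hchoose, Sym2.eq_swap]
    -- case 7 : ¬ a ⊆ I, b ⊆ I, b ⊆ D
    · have := congrArg Fin.val heq
      simp only at this
      obtain ⟨x, hx, hxI⟩ := Finset.not_subset.mp h1
      have hxt : (x : ℕ) < t := by
        by_contra hcon
        exact hxI ((hmemI x).mpr (by omega))
      have hmle : ((a.1.min' (hvne a) : Fin n) : ℕ) ≤ (x : ℕ) :=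
        Finset.min'_le a.1 x hx
      omega
    -- case 8 : ¬ a ⊆ I, b ⊆ I, ¬ b ⊆ D
    · have hvv := congrArg Fin.val heq
      simp only at hvv
      have hbR : b ∈ R := (hmemR b).mpr ⟨h7, h8⟩
      have hS : ∃ S : ↥R, ((g S : Fin t) : ℕ) = ((a.1.min' (hvne a) : Fin n) : ℕ) :=
        ⟨⟨b, hbR⟩, hvv.symm⟩
      have hchoose : (Classical.choose hS).1 = b := by
        have hspec := Classical.choose_spec hS
        have : g (Classical.choose hS) = g ⟨b, hbR⟩ :=
          Fin.val_injective (by rw [hspec, hvv])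
        exact congrArg Subtype.val (g.injective this)
      refine hrem ⟨a, ?_⟩
      simp only [hf]
      rw [dif_neg h1, dif_pos hS, hchoose]
    -- case 9 : ¬ a ⊆ I, ¬ b ⊆ I
    · have hvv := congrArg Fin.val heq
      simp only at hvv
      have hmm : a.1.min' (hvne a) = b.1.min' (hvne b) := Fin.val_injective hvv
      have hma := Finset.min'_mem a.1 (hvne a)
      have hmb := Finset.min'_mem b.1 (hvne b)
      rw [hmm] at hma
      exact Finset.disjoint_left.mp hdisj hma hmb
  have hcolorable : (oneRemoved (kneserGraph n k) f).Colorable (t + 1) :=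
    ⟨SimpleGraph.Coloring.mk col (fun {a b} hab => hvalid a b hab)⟩
  have h1 : chromNum (oneRemoved (kneserGraph n k) f) ≤ t + 1 :=
    Nat.sInf_le hcolorable
  have h2 : robustChromNum (kneserGraph n k) ≤ chromNum (oneRemoved (kneserGraph n k) f) :=
    Nat.sInf_le ⟨f, hsel, rfl⟩
  omega
end

section
/- A finite graph G satisfies χ₁(G) = 1 if and only if G is quasi-unicyclic. In particular, every tree T satisfies χ₁(T) = 1. -/
open SimpleGraph

section RobustAuxSection

open SimpleGraph Walk

namespace RobustAux

variable {V : Type} {G : SimpleGraph V}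

lemma mem_support_of_mem_edges' {a b x : V} {p : G.Walk a b} {e : Sym2 V}
    (he : e ∈ p.edges) (hx : x ∈ e) : x ∈ p.support := by
  induction e with
  | _ u w =>
    rcases Sym2.mem_iff.mp hx with rfl | rfl
    · exact p.fst_mem_support_of_mem_edges he
    · exact p.snd_mem_support_of_mem_edges he

lemma end_mem_tail_support {a b : V} (p : G.Walk a b) (hp : ¬ p.Nil) :
    b ∈ p.support.tail := by
  cases p with
  | nil => simp at hp
  | cons h q => simpa using q.end_mem_support

lemma support_getLast? {a b : V} (p : G.Walk a b) : p.support.getLast? = some b := by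
  rw [List.getLast?_eq_getLast (by simp), p.getLast_support]

/-- In a path, any edge containing the initial vertex is the first edge. -/
lemma path_first_edge {x y : V} {p : G.Walk x y} (hp : p.IsPath) {e : Sym2 V}
    (he : e ∈ p.edges) (hx : x ∈ e) : p.edges.head? = some e := by
  induction p with
  | nil => simp at he
  | cons h q ih =>
    rename_i a c _
    rw [Walk.edges_cons] at he
    rcases List.mem_cons.mp he with rfl | he'
    · simp
    · exfalso
      have : a ∈ q.support := mem_support_of_mem_edges' he' hx
      exact ((Walk.cons_isPath_iff _ _).mp hp).2 this

lemma nodup_getLast?_not_mem_dropLast {l : List V} (hl : l.Nodup) {x : V}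
    (hx : l.getLast? = some x) : x ∉ l.dropLast := by
  intro hmem
  have hne : l ≠ [] := by rintro rfl; simp at hx
  have hsplit := List.dropLast_append_getLast hne
  rw [List.getLast?_eq_getLast hne] at hx
  have hxl : l.getLast hne = x := by injection hx
  rw [← hsplit] at hl
  rcases List.nodup_append.mp hl with ⟨_, _, hdisj⟩
  exact hdisj x hmem x (by simp [hxl]) rfl

/-- dropLast of a cycle's support is Nodup. -/
lemma cycle_dropLast_nodup {x : V} {W : G.Walk x x} (hW : W.IsCycle) :
    W.support.dropLast.Nodup := by
  have htail : W.support.tail.Nodup := hW.2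
  have h1 : W.support = x :: W.support.tail := W.support_eq_cons
  have htne : W.support.tail ≠ [] := by
    have h3 := hW.three_le_length
    have hlen : W.support.length = W.length + 1 := W.length_support
    intro h
    rw [h1, h] at hlen
    simp only [List.length_cons, List.length_nil] at hlen
    omega
  rw [h1, List.dropLast_cons_of_ne_nil htne]
  refine List.nodup_cons.mpr ⟨?_, htail.sublist (List.dropLast_sublist _)⟩
  have hlast : W.support.tail.getLast? = some x := by
    have := support_getLast? W
    rw [h1, List.getLast?_cons] at this
    rw [List.getLast?_eq_getLast htne, Option.getD_some] at this
    rw [List.getLast?_eq_getLast htne, this]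
  exact nodup_getLast?_not_mem_dropLast htail hlast

/-- A prefix of a cycle's support ending at a vertex other than the base is a path support. -/
lemma cycle_prefix_path {x z : V} {W : G.Walk x x} (hW : W.IsCycle) {seg : G.Walk x z}
    (hpre : seg.support <+: W.support) (hne : z ≠ x) : seg.IsPath := by
  rw [Walk.isPath_def]
  have hlt : seg.support.length < W.support.length := by
    rcases lt_or_eq_of_le hpre.length_le with h | h
    · exact h
    · exfalso
      have : seg.support = W.support := hpre.eq_of_length h
      have h1 := support_getLast? seg
      rw [this, support_getLast? W] at h1
      injection h1 with h2
      exact hne h2.symm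
  have hpre' : seg.support <+: W.support.dropLast := by
    rw [List.prefix_iff_eq_take.mp hpre, List.dropLast_eq_take]
    apply List.take_prefix_take_left
    omega
  exact (cycle_dropLast_nodup hW).sublist hpre'.sublist


lemma isCycle_reverse {x : V} {W : G.Walk x x} (hW : W.IsCycle) : W.reverse.IsCycle := by
  rw [Walk.isCycle_def]
  refine ⟨hW.isTrail.reverse _, ?_, ?_⟩
  · intro h
    have hlen := congr_arg Walk.length h
    rw [Walk.length_reverse] at hlen
    have h3 := hW.three_le_length
    simp only [Walk.length_nil] at hlen
    omega
  · rw [Walk.support_reverse, List.tail_reverse, List.nodup_reverse]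
    exact cycle_dropLast_nodup hW

/-- Propagation of forced selections along a trail. -/
lemma prop_along {f : V → Sym2 V} (hsel : ∀ v, v ∈ f v)
    (hcov : ∀ ⦃x y : V⦄, G.Adj x y → ∃ v, f v = s(x, y)) :
    ∀ {a b : V} (W : G.Walk a b), W.IsTrail → ¬ W.Nil → f a ∉ W.edges →
      ∃ w ∈ W.support, w ≠ b ∧ f b = s(w, b) ∧ s(w, b) ∈ W.edges := by
  intro a b W
  induction W with
  | nil => intro _ hn _; simp at hn
  | cons h q ih =>
    rename_i a c d
    intro htr _ hfa
    obtain ⟨v, hv⟩ := hcov h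
    have hvm : v ∈ f v := hsel v
    rw [hv] at hvm
    have hfc : f c = s(a, c) := by
      rcases Sym2.mem_iff.mp hvm with rfl | rfl
      · exact absurd (hv ▸ List.mem_cons_self : f v ∈ (Walk.cons h q).edges) hfa
      · exact hv
    by_cases hq : q.Nil
    · have hbc : c = d := q.eq_of_length_eq_zero (Walk.nil_iff_length_eq.mp hq)
      subst hbc
      refine ⟨a, by simp, (G.ne_of_adj h), hfc, ?_⟩
      rw [Walk.edges_cons]; exact List.mem_cons_self
    · have htr' := ((Walk.isTrail_cons _ _).mp htr).1
      have hnot := ((Walk.isTrail_cons _ _).mp htr).2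
      have hfc' : f c ∉ q.edges := by rw [hfc]; exact hnot
      obtain ⟨w, hw, hwb, hfb, hmem⟩ := ih htr' hq hfc'
      exact ⟨w, by simp [hw], hwb, hfb, by rw [Walk.edges_cons]; exact List.mem_cons_of_mem _ hmem⟩

/-- find the first vertex of a walk belonging to a set. -/
lemma get_first {T : Set V} : ∀ {a b : V} (W : G.Walk a b), (∃ x ∈ W.support, x ∈ T) →
    ∃ (z : V) (seg : G.Walk a z), z ∈ T ∧ (∀ u ∈ seg.support, u ∈ T → u = z) ∧
      seg.edges <+: W.edges ∧ seg.support <+: W.support := by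
  intro a b W
  induction W with
  | nil =>
    rename_i a
    rintro ⟨x, hx, hxT⟩
    have hxa : x = a := by simpa using hx
    subst hxa
    exact ⟨x, Walk.nil, hxT, by simp, by simp, by simp⟩
  | cons h q ih =>
    rename_i a c d
    intro hex
    by_cases haT : a ∈ T
    · refine ⟨a, Walk.nil, haT, by simp, by simp, ?_⟩
      rw [Walk.support_cons]
      exact ⟨q.support, by simp⟩
    · have hex' : ∃ x ∈ q.support, x ∈ T := by
        obtain ⟨x, hx, hxT⟩ := hex
        rw [Walk.support_cons] at hx
        rcases List.mem_cons.mp hx with rfl | hx'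
        · exact absurd hxT haT
        · exact ⟨x, hx', hxT⟩
      obtain ⟨z, seg, hzT, hcond, ⟨t1, ht1⟩, ⟨t2, ht2⟩⟩ := ih hex'
      refine ⟨z, Walk.cons h seg, hzT, ?_, ?_, ?_⟩
      · intro u hu huT
        rw [Walk.support_cons] at hu
        rcases List.mem_cons.mp hu with rfl | hu'
        · exact absurd huT haT
        · exact hcond u hu' huT
      · exact ⟨t1, by rw [Walk.edges_cons, Walk.edges_cons, List.cons_append, ht1]⟩
      · exact ⟨t2, by rw [Walk.support_cons, Walk.support_cons, List.cons_append, ht2]⟩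

lemma nodup_head?_ne_getLast? {l : List (Sym2 V)} (hl : l.Nodup) (h2 : 2 ≤ l.length) {e : Sym2 V}
    (hh : l.head? = some e) : l.getLast? ≠ some e := by
  match l, hl, h2, hh with
  | a :: b :: l', hl, _, hh =>
    intro hlast
    have ha : a = e := by injection hh
    rw [List.getLast?_cons_cons] at hlast
    have hmem : e ∈ b :: l' := by
      have hne : (b :: l') ≠ [] := by simp
      rw [List.getLast?_eq_getLast hne] at hlast
      have hm := List.getLast_mem hne
      rw [(by injection hlast : (b :: l').getLast hne = e)] at hm
      exact hm
    rw [List.nodup_cons] at hl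
    exact hl.1 (ha ▸ hmem)

variable [Nonempty V]

/-- A global killer function. -/
noncomputable def killer (f : V → Sym2 V) : Sym2 V → V := fun e =>
  letI := Classical.dec (∃ v, v ∈ e ∧ f v = e)
  if h : ∃ v, v ∈ e ∧ f v = e then h.choose else Classical.arbitrary V

lemma killer_spec {f : V → Sym2 V} (hsel : ∀ v, v ∈ f v)
    (hcov : ∀ ⦃x y : V⦄, G.Adj x y → ∃ v, f v = s(x, y)) {e : Sym2 V} (he : e ∈ G.edgeSet) :
    killer f e ∈ e ∧ f (killer f e) = e := by
  have hex : ∃ v, v ∈ e ∧ f v = e := by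
    induction e with
    | _ x y =>
      obtain ⟨v, hv⟩ := hcov he
      exact ⟨v, by rw [← hv]; exact hsel v, hv⟩
  rw [killer, dif_pos hex]
  exact hex.choose_spec

/-- On a cycle, every vertex's selection is an edge of the cycle. -/
lemma cycle_forced [Fintype V] [DecidableEq V] {f : V → Sym2 V} (hsel : ∀ v, v ∈ f v)
    (hcov : ∀ ⦃x y : V⦄, G.Adj x y → ∃ v, f v = s(x, y)) {u : V} {c : G.Walk u u}
    (hc : c.IsCycle) : ∀ w ∈ c.support, f w ∈ c.edges := by
  classical
  have hnodupE : c.edges.Nodup := hc.isTrail.edges_nodup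
  have hcardE : c.edges.toFinset.card = c.length := by
    rw [List.toFinset_card_of_nodup hnodupE, c.length_edges]
  have hu_tail : u ∈ c.support.tail := end_mem_tail_support c hc.not_nil
  have hSeq : c.support.toFinset = c.support.tail.toFinset := by
    conv_lhs => rw [c.support_eq_cons]
    rw [List.toFinset_cons]
    exact Finset.insert_eq_self.mpr (List.mem_toFinset.mpr hu_tail)
  have hcardS : c.support.toFinset.card = c.length := by
    rw [hSeq, List.toFinset_card_of_nodup hc.2]
    have := c.length_support
    rw [c.support_eq_cons] at this
    simp only [List.length_cons] at this
    omega
  have hmap : ∀ e ∈ c.edges.toFinset, killer f e ∈ c.support.toFinset := by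
    intro e he
    rw [List.mem_toFinset] at he
    have := (killer_spec hsel hcov (c.edges_subset_edgeSet he)).1
    exact List.mem_toFinset.mpr (mem_support_of_mem_edges' he this)
  have hinj : ∀ (e₁ e₂ : Sym2 V), e₁ ∈ c.edges.toFinset → e₂ ∈ c.edges.toFinset →
      killer f e₁ = killer f e₂ → e₁ = e₂ := by
    intro e₁ e₂ he₁ he₂ hk
    rw [List.mem_toFinset] at he₁ he₂
    have h1 := (killer_spec hsel hcov (c.edges_subset_edgeSet he₁)).2
    have h2 := (killer_spec hsel hcov (c.edges_subset_edgeSet he₂)).2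
    rw [← h1, ← h2, hk]
  intro w hw
  obtain ⟨e, he, hwe⟩ := Finset.surj_on_of_inj_on_of_card_le
    (fun e _ => killer f e) hmap hinj (by omega) w (List.mem_toFinset.mpr hw)
  rw [List.mem_toFinset] at he
  have := (killer_spec hsel hcov (c.edges_subset_edgeSet he)).2
  rw [hwe, this]
  exact he

/-- Orient a cycle so a given edge is not first. -/
lemma orient_cycle {x₀ : V} {q0 : G.Walk x₀ x₀} (hq : q0.IsCycle) (e : Sym2 V) :
    ∃ W : G.Walk x₀ x₀, W.IsCycle ∧ (∀ y, y ∈ W.support ↔ y ∈ q0.support) ∧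
      (∀ e', e' ∈ W.edges ↔ e' ∈ q0.edges) ∧ W.edges.head? ≠ some e := by
  by_cases hh : q0.edges.head? = some e
  · refine ⟨q0.reverse, isCycle_reverse hq, ?_, ?_, ?_⟩
    · intro y; rw [Walk.support_reverse, List.mem_reverse]
    · intro e'; rw [Walk.edges_reverse, List.mem_reverse]
    · rw [Walk.edges_reverse, List.head?_reverse]
      apply nodup_head?_ne_getLast? hq.isTrail.edges_nodup ?_ hh
      rw [q0.length_edges]
      have := hq.three_le_length
      omega
  · exact ⟨q0, hq, fun _ => Iff.rfl, fun _ => Iff.rfl, hh⟩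

lemma mem_support_rotate [DecidableEq V] {u x : V} {c : G.Walk u u} (hc : ¬ c.Nil) (hx : x ∈ c.support) :
    ∀ y, y ∈ (c.rotate x hx).support ↔ y ∈ c.support := by
  intro y
  have h1 := (support_rotate c x hx).mem_iff (a := y)
  rw [(c.rotate x hx).support_eq_cons, c.support_eq_cons]
  simp only [List.mem_cons]
  constructor
  · rintro (rfl | hy)
    · rcases List.mem_cons.mp (c.support_eq_cons ▸ hx) with h | h
      · exact Or.inl h
      · exact Or.inr h
    · exact Or.inr (h1.mp hy)
  · rintro (rfl | hy)
    · exact Or.inr (h1.mpr (end_mem_tail_support c hc))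
    · exact Or.inr (h1.mpr hy)

lemma edge_endpoints {e : Sym2 V} (he : e ∈ G.edgeSet) :
    ∃ α β : V, α ≠ β ∧ e = s(α, β) := by
  induction e with
  | _ x y => exact ⟨x, y, G.ne_of_adj he, rfl⟩

/-- Direction A: a covering 1-selection forces any two reachable cycles to have the
same edge sets. -/
lemma cover_qu [Fintype V] [DecidableEq V] {f : V → Sym2 V} (hsel : ∀ v, v ∈ f v)
    (hcov : ∀ ⦃x y : V⦄, G.Adj x y → ∃ v, f v = s(x, y)) {u v : V}
    {p : G.Walk u u} {q : G.Walk v v} (hp : p.IsCycle) (hq : q.IsCycle)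
    (hr : G.Reachable u v) {e : Sym2 V} (he : e ∈ q.edges) (hne : e ∉ p.edges) : False := by
  classical
  have hA1p := cycle_forced hsel hcov hp
  have hA1q := cycle_forced hsel hcov hq
  by_cases hsub : ∀ x ∈ q.support, x ∈ p.support
  · have heG := q.edges_subset_edgeSet he
    obtain ⟨hk1, hk2⟩ := killer_spec hsel hcov heG
    have hks : killer f e ∈ q.support := mem_support_of_mem_edges' he hk1
    exact hne (hk2 ▸ hA1p _ (hsub _ hks))
  push_neg at hsub
  obtain ⟨x₀, hx₀q, hx₀p⟩ := hsub
  by_cases hAcase : ∃ a ∈ q.support, a ∈ p.support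
  · -- walk around q towards p.support
    obtain ⟨a, haq, hap⟩ := hAcase
    set q1 : G.Walk x₀ x₀ := q.rotate x₀ hx₀q with hq1def
    have hq1 : q1.IsCycle := hq.rotate hx₀q
    have hq1edges : ∀ e', e' ∈ q1.edges ↔ e' ∈ q.edges := fun e' =>
      (q.rotate_edges x₀ hx₀q).mem_iff
    have hq1sup := mem_support_rotate hq.not_nil hx₀q
    obtain ⟨W, hWc, hWsup, hWedg, hWhead⟩ := orient_cycle hq1 (f x₀)
    have hexT : ∃ s ∈ W.support, s ∈ {y | y ∈ p.support} := by
      exact ⟨a, (hWsup a).mpr ((hq1sup a).mpr haq), hap⟩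
    obtain ⟨z, seg, hzT, hcond, hpreE, hpreS⟩ := get_first W hexT
    have hzx : z ≠ x₀ := fun h => hx₀p (h ▸ hzT)
    have hsegpath : seg.IsPath := cycle_prefix_path hWc hpreS hzx
    have hsegnn : ¬ seg.Nil := Walk.not_nil_of_ne (Ne.symm hzx)
    have hfnot : f x₀ ∉ seg.edges := by
      intro hmem
      have h1 := path_first_edge hsegpath hmem (hsel x₀)
      obtain ⟨t, ht⟩ := hpreE
      apply hWhead
      rw [← ht, List.head?_append, h1]
      rfl
    obtain ⟨w, hwsup, hwz, hfz, _⟩ := prop_along hsel hcov seg hsegpath.isTrail hsegnn hfnot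
    have hwP : w ∉ p.support := fun hwP => hwz (hcond w hwsup hwP)
    have hfzp : f z ∈ p.edges := hA1p z hzT
    rw [hfz] at hfzp
    exact hwP (p.fst_mem_support_of_mem_edges hfzp)
  · push_neg at hAcase
    set L : Set ℕ :=
      {n | ∃ (x z : V) (r : G.Walk x z), x ∈ q.support ∧ z ∈ p.support ∧ r.length = n} with hLdef
    have hLne : L.Nonempty := by
      obtain ⟨r0⟩ := hr.symm
      exact ⟨r0.length, v, u, r0, q.start_mem_support, p.start_mem_support, rfl⟩
    obtain ⟨x, z, r, hxq, hzp, hrlen⟩ := Nat.sInf_mem hLne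
    set n₀ := sInf L with hn₀
    have hble : r.bypass.length ≤ n₀ := hrlen ▸ r.length_bypass_le
    have hbge : n₀ ≤ r.bypass.length :=
      Nat.sInf_le ⟨x, z, r.bypass, hxq, hzp, rfl⟩
    have hblen : r.bypass.length = n₀ := le_antisymm hble hbge
    set rb := r.bypass with hrb
    have hrbp : rb.IsPath := r.bypass_isPath
    have hminp : ∀ u' ∈ rb.support, u' ∈ p.support → u' = z := by
      intro u' hu' hu'p
      have h1 : n₀ ≤ (rb.takeUntil u' hu').length :=
        Nat.sInf_le ⟨x, u', rb.takeUntil u' hu', hxq, hu'p, rfl⟩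
      have h2 := congr_arg Walk.length (rb.take_spec hu')
      rw [Walk.length_append] at h2
      have h3 : (rb.dropUntil u' hu').length = 0 := by omega
      exact ((rb.dropUntil u' hu').eq_of_length_eq_zero h3)
    have hminq : ∀ u' ∈ rb.support, u' ∈ q.support → u' = x := by
      intro u' hu' hu'q
      have h1 : n₀ ≤ (rb.dropUntil u' hu').length :=
        Nat.sInf_le ⟨u', z, rb.dropUntil u' hu', hu'q, hzp, rfl⟩
      have h2 := congr_arg Walk.length (rb.take_spec hu')
      rw [Walk.length_append] at h2
      have h3 : (rb.takeUntil u' hu').length = 0 := by omega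
      exact ((rb.takeUntil u' hu').eq_of_length_eq_zero h3).symm
    have hxz : x ≠ z := fun h => hAcase x hxq (h ▸ hzp)
    have hnn : ¬ rb.Nil := Walk.not_nil_of_ne hxz
    have hfxq : f x ∈ q.edges := hA1q x hxq
    have hfnot : f x ∉ rb.edges := by
      intro hmem
      obtain ⟨α, β, hab, heq⟩ := edge_endpoints (q.edges_subset_edgeSet hfxq)
      have hα : α ∈ rb.support := mem_support_of_mem_edges' (heq ▸ hmem) (by simp)
      have hβ : β ∈ rb.support := mem_support_of_mem_edges' (heq ▸ hmem) (by simp)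
      have hαq : α ∈ q.support := mem_support_of_mem_edges' (heq ▸ hfxq) (by simp)
      have hβq : β ∈ q.support := mem_support_of_mem_edges' (heq ▸ hfxq) (by simp)
      exact hab ((hminq α hα hαq).trans (hminq β hβ hβq).symm)
    obtain ⟨w, hwsup, hwz, hfz, _⟩ := prop_along hsel hcov rb hrbp.isTrail hnn hfnot
    have hwP : w ∉ p.support := fun hwP => hwz (hminp w hwsup hwP)
    have hfzp : f z ∈ p.edges := hA1p z hzp
    rw [hfz] at hfzp
    exact hwP (p.fst_mem_support_of_mem_edges hfzp)

lemma path_end_ne {w y : V} {p : G.Walk w y} (hp : p.IsPath) (hn : ¬ p.Nil) : y ≠ w := by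
  intro h
  subst h
  have h1 : y ∈ p.support.tail := end_mem_tail_support p hn
  have h2 := hp.support_nodup
  rw [p.support_eq_cons, List.nodup_cons] at h2
  exact h2.1 h1

/-- Greedy maximal-path extension lemma. -/
lemma extend_max [Fintype V] [DecidableEq V]
    (hdeg : ∀ (v t : V), G.Adj v t → ∃ t', t' ≠ t ∧ G.Adj v t') (T : Set V)
    {w y0 : V} (p0 : G.Walk w y0) (hp0 : p0.IsPath) (hn0 : ¬ p0.Nil)
    (hT0 : ∀ x ∈ p0.support, x ∈ T → x = w) :
    ∃ (y : V) (p : G.Walk w y) (t : V), G.Adj y t ∧ p.IsPath ∧ ¬ p.Nil ∧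
      (∀ x ∈ p.support, x ∈ T → x = w) ∧ s(y, t) ∉ p.edges ∧ (t ∈ p.support ∨ t ∈ T) := by
  classical
  set L : Set ℕ := {n | ∃ (y : V) (p : G.Walk w y), p.IsPath ∧
    (∀ x ∈ p.support, x ∈ T → x = w) ∧ p.length = n} with hLdef
  have hLne : L.Nonempty := ⟨p0.length, ⟨y0, p0, hp0, hT0, rfl⟩⟩
  have hLbdd : BddAbove L := by
    refine ⟨Fintype.card V, ?_⟩
    rintro n ⟨y, p, hp, _, rfl⟩
    exact le_of_lt hp.length_lt
  obtain ⟨y, p, hp, hTp, hplen⟩ := Nat.sSup_mem hLne hLbdd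
  have hp0len : 1 ≤ p0.length := by
    rw [Walk.not_nil_iff_lt_length] at hn0; omega
  have hlen1 : 1 ≤ p.length := by
    have := le_csSup hLbdd (show p0.length ∈ L from ⟨y0, p0, hp0, hT0, rfl⟩)
    omega
  have hnn : ¬ p.Nil := by rw [Walk.not_nil_iff_lt_length]; omega
  have hyw : y ≠ w := path_end_ne hp hnn
  -- previous vertex
  have hrev : ¬ p.reverse.Nil := by
    rw [Walk.not_nil_iff_lt_length, Walk.length_reverse]; omega
  obtain ⟨c, hyc, qrev, hqrev⟩ := Walk.not_nil_iff.mp hrev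
  obtain ⟨t, htc, htmem⟩ := hdeg y c hyc
  have hnotin : s(y, t) ∉ p.edges := by
    intro hmem
    have hmem' : s(y, t) ∈ p.reverse.edges := by
      rw [Walk.edges_reverse, List.mem_reverse]; exact hmem
    have h1 := path_first_edge hp.reverse hmem' (by simp)
    rw [hqrev] at h1
    simp only [Walk.edges_cons, List.head?_cons, Option.some.injEq] at h1
    rw [Sym2.eq_iff] at h1
    rcases h1 with ⟨-, h2⟩ | ⟨h2, h3⟩
    · exact htc h2.symm
    · exact htc (h3.trans h2).symm
  refine ⟨y, p, t, htmem, hp, hnn, hTp, hnotin, ?_⟩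
  by_cases ht : t ∈ p.support
  · exact Or.inl ht
  by_cases htT : t ∈ T
  · exact Or.inr htT
  exfalso
  -- extend
  set p' : G.Walk w t := (Walk.cons htmem.symm p.reverse).reverse with hp'def
  have hp'path : p'.IsPath := by
    rw [hp'def, Walk.isPath_reverse_iff]
    apply hp.reverse.cons
    rw [Walk.support_reverse, List.mem_reverse]
    exact ht
  have hp'len : p'.length = p.length + 1 := by
    rw [hp'def, Walk.length_reverse, Walk.length_cons, Walk.length_reverse]
  have hp'T : ∀ x ∈ p'.support, x ∈ T → x = w := by
    intro x hx hxT
    rw [hp'def, Walk.support_reverse, List.mem_reverse, Walk.support_cons] at hx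
    rcases List.mem_cons.mp hx with rfl | hx'
    · exact absurd hxT htT
    · rw [Walk.support_reverse, List.mem_reverse] at hx'
      exact hTp x hx' hxT
  have : p.length + 1 ≤ sSup L := by
    have := le_csSup hLbdd (show p'.length ∈ L from ⟨t, p', hp'path, hp'T, rfl⟩)
    omega
  omega

lemma support_takeUntil_prefix [DecidableEq V] {a b u : V} (p : G.Walk a b)
    (h : u ∈ p.support) : (p.takeUntil u h).support <+: p.support := by
  conv_rhs => rw [← p.take_spec h]
  rw [Walk.support_append]
  exact ⟨_, rfl⟩

lemma cycle_takeUntil_path [DecidableEq V] {x z : V} {c : G.Walk x x} (hc : c.IsCycle)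
    (hz : z ∈ c.support) (hne : z ≠ x) : (c.takeUntil z hz).IsPath :=
  cycle_prefix_path hc (support_takeUntil_prefix c hz) hne

/-- Key lemma: in a quasi-unicyclic graph with no degree-one vertices, every edge
incident to a cycle belongs to the cycle. -/
lemma no_extra_edge [Fintype V] [DecidableEq V]
    (hqu : ∀ (u' v' : V) (p : G.Walk u' u') (q : G.Walk v' v'), p.IsCycle → q.IsCycle →
      G.Reachable u' v' → p.edges.toFinset = q.edges.toFinset)
    (hdeg : ∀ (v t : V), G.Adj v t → ∃ t', t' ≠ t ∧ G.Adj v t')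
    {u₀ : V} {c : G.Walk u₀ u₀} (hc : c.IsCycle) {w z : V} (hw : w ∈ c.support)
    (hwz : G.Adj w z) (hnot : s(w, z) ∉ c.edges) : False := by
  have hwzne : w ≠ z := G.ne_of_adj hwz
  by_cases hz : z ∈ c.support
  · -- chord case
    set c' : G.Walk z z := c.rotate z hz with hc'def
    have hc' : c'.IsCycle := hc.rotate hz
    have hwc' : w ∈ c'.support := (mem_support_rotate hc.not_nil hz w).mpr hw
    set seg := c'.takeUntil w hwc' with hsegdef
    have hsegpath : seg.IsPath := cycle_takeUntil_path hc' hwc' hwzne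
    have hsegedges : s(w, z) ∉ seg.edges := by
      intro hmem
      exact hnot ((c.rotate_edges z hz).mem_iff.mp (c'.edges_takeUntil_subset hwc' hmem))
    have hcyc : (Walk.cons hwz seg).IsCycle := SimpleGraph.Path.cons_isCycle ⟨seg, hsegpath⟩ hwz hsegedges
    have hreach : G.Reachable u₀ w := ⟨c.takeUntil w hw⟩
    have heq := hqu u₀ w c (Walk.cons hwz seg) hc hcyc hreach
    apply hnot
    rw [← List.mem_toFinset, heq, List.mem_toFinset, Walk.edges_cons]
    exact List.mem_cons_self
  · -- go exploring outside the cycle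
    set T : Set V := {x | x ∈ c.support} with hTdef
    have hp0path : (Walk.cons hwz (Walk.nil' z)).IsPath := by
      rw [Walk.cons_isPath_iff]
      exact ⟨Walk.IsPath.nil, by simpa using hwzne⟩
    have hp0T : ∀ x ∈ (Walk.cons hwz (Walk.nil' z)).support, x ∈ T → x = w := by
      intro x hx hxT
      rcases List.mem_cons.mp (by simpa using hx : x ∈ [w, z]) with rfl | hx'
      · rfl
      · have : x = z := by simpa using hx'
        exact absurd (this ▸ hxT) hz
    obtain ⟨y, p, t, hAdj, hp, hnn, hTp, hnotin, hcase⟩ :=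
      extend_max hdeg T (Walk.cons hwz (Walk.nil' z)) hp0path (by simp) hp0T
    have hyw : y ≠ w := path_end_ne hp hnn
    have hy_not : y ∉ c.support := fun h => hyw (hTp y p.end_mem_support h)
    have hdisj : ∀ e ∈ p.edges, e ∉ c.edges := by
      intro e hep hec
      obtain ⟨α, β, hab, rfl⟩ := edge_endpoints (p.edges_subset_edgeSet hep)
      have hα : α = w := hTp α (mem_support_of_mem_edges' hep (by simp))
        (mem_support_of_mem_edges' hec (by simp))
      have hβ : β = w := hTp β (mem_support_of_mem_edges' hep (by simp))
        (mem_support_of_mem_edges' hec (by simp))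
      exact hab (hα.trans hβ.symm)
    have hreach : G.Reachable u₀ y := Walk.reachable (c.takeUntil w hw) |>.trans ⟨p⟩
    by_cases ht : t ∈ p.support
    · -- close up inside p
      set d' := p.dropUntil t ht with hd'def
      have hd'path : d'.IsPath := hp.dropUntil ht
      have hd'edges : s(y, t) ∉ d'.edges := fun hmem => hnotin (p.edges_dropUntil_subset ht hmem)
      have hcyc : (Walk.cons hAdj d').IsCycle :=
        SimpleGraph.Path.cons_isCycle ⟨d', hd'path⟩ hAdj hd'edges
      have heq := hqu u₀ y c (Walk.cons hAdj d') hc hcyc hreach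
      obtain ⟨e_c, he_c⟩ := List.exists_mem_of_ne_nil c.edges (by
        intro h0
        have h1 := c.length_edges
        rw [h0] at h1
        have h2 := hc.three_le_length
        simp at h1; omega)
      have he_c' : e_c ∈ (Walk.cons hAdj d').edges := by
        rw [← List.mem_toFinset, ← heq, List.mem_toFinset]; exact he_c
      rw [Walk.edges_cons] at he_c'
      rcases List.mem_cons.mp he_c' with rfl | hmem
      · exact hy_not (mem_support_of_mem_edges' he_c (by simp))
      · exact hdisj e_c (p.edges_dropUntil_subset ht hmem) he_c
    · -- t is on the cycle
      rcases hcase with ht' | htT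
      · exact absurd ht' ht
      have htc : t ∈ c.support := htT
      have htw : t ≠ w := fun h => ht (h ▸ p.start_mem_support)
      set c' : G.Walk t t := c.rotate t htc with hc'def
      have hc' : c'.IsCycle := hc.rotate htc
      have hwc' : w ∈ c'.support := (mem_support_rotate hc.not_nil htc w).mpr hw
      set seg := c'.takeUntil w hwc' with hsegdef
      have hsegpath : seg.IsPath := cycle_takeUntil_path hc' hwc' htw.symm
      have hsegsup : ∀ x ∈ seg.support, x ∈ c.support := fun x hx =>
        (mem_support_rotate hc.not_nil htc x).mp (c'.support_takeUntil_subset hwc' hx)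
      set big := seg.append p with hbigdef
      have hbigpath : big.IsPath := by
        rw [Walk.isPath_def, hbigdef, Walk.support_append]
        apply List.Nodup.append hsegpath.support_nodup
          (hp.support_nodup.sublist (List.tail_sublist _))
        intro x hx1 hx2
        have hx3 : x ∈ p.support := List.mem_of_mem_tail hx2
        have hxw : x = w := hTp x hx3 (hsegsup x hx1)
        subst hxw
        have := hp.support_nodup
        rw [p.support_eq_cons, List.nodup_cons] at this
        exact this.1 hx2
      have hbignot : s(y, t) ∉ big.edges := by
        rw [hbigdef, Walk.edges_append, List.mem_append]
        rintro (hmem | hmem)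
        · exact hy_not (hsegsup y (mem_support_of_mem_edges' hmem (by simp)))
        · exact hnotin hmem
      have hcyc : (Walk.cons hAdj big).IsCycle :=
        SimpleGraph.Path.cons_isCycle ⟨big, hbigpath⟩ hAdj hbignot
      have heq := hqu u₀ y c (Walk.cons hAdj big) hc hcyc hreach
      have hyt : s(y, t) ∈ c.edges := by
        rw [← List.mem_toFinset, heq, List.mem_toFinset, Walk.edges_cons]
        exact List.mem_cons_self
      exact hy_not (mem_support_of_mem_edges' hyt (by simp))

/-- Existence of a cycle when there is an edge and no degree-one vertex. -/
lemma exists_cycle' [Fintype V] [DecidableEq V]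
    (hdeg : ∀ (v t : V), G.Adj v t → ∃ t', t' ≠ t ∧ G.Adj v t')
    {a b : V} (hab : G.Adj a b) : ∃ (y : V) (cyc : G.Walk y y), cyc.IsCycle := by
  have hp0path : (Walk.cons hab (Walk.nil' b)).IsPath := by
    rw [Walk.cons_isPath_iff]
    exact ⟨Walk.IsPath.nil, by simpa using G.ne_of_adj hab⟩
  obtain ⟨y, p, t, hAdj, hp, hnn, hTp, hnotin, hcase⟩ :=
    extend_max hdeg (∅ : Set V) (Walk.cons hab (Walk.nil' b)) hp0path (by simp)
      (by intro x _ hx; exact absurd hx (Set.notMem_empty x))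
  rcases hcase with ht | ht
  · have hd'path : (p.dropUntil t ht).IsPath := hp.dropUntil ht
    have hd'edges : s(y, t) ∉ (p.dropUntil t ht).edges := fun hmem =>
      hnotin (p.edges_dropUntil_subset ht hmem)
    exact ⟨y, Walk.cons hAdj (p.dropUntil t ht),
      SimpleGraph.Path.cons_isCycle ⟨_, hd'path⟩ hAdj hd'edges⟩
  · exact absurd ht (Set.notMem_empty t)

lemma edges_mapLe {H : SimpleGraph V} (hHG : H ≤ G) {a b : V} (p : H.Walk a b) :
    (p.mapLe hHG).edges = p.edges := by
  induction p with
  | nil => rfl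
  | cons h q ih =>
    rw [Walk.mapLe] at ih ⊢
    rw [Walk.map_cons, Walk.edges_cons, Walk.edges_cons, ih]
    rfl

lemma qu_transfer [DecidableEq V] {H : SimpleGraph V} (hHG : H ≤ G)
    (hqu : ∀ (u' v' : V) (p : G.Walk u' u') (q : G.Walk v' v'), p.IsCycle → q.IsCycle →
      G.Reachable u' v' → p.edges.toFinset = q.edges.toFinset) :
    ∀ (u' v' : V) (p : H.Walk u' u') (q : H.Walk v' v'), p.IsCycle → q.IsCycle →
      H.Reachable u' v' → p.edges.toFinset = q.edges.toFinset := by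
  intro u' v' p q hp hq hr
  have := hqu u' v' (p.mapLe hHG) (q.mapLe hHG) (hp.mapLe _) (hq.mapLe _) (hr.mono hHG)
  rwa [edges_mapLe, edges_mapLe] at this

lemma cycle_edges_ne_nil {x : V} {c : G.Walk x x} (hc : c.IsCycle) : c.edges ≠ [] := by
  intro h0
  have h1 := c.length_edges
  rw [h0] at h1
  have h2 := hc.three_le_length
  simp at h1; omega

/-- Direction B: a quasi-unicyclic graph admits a covering 1-selection. -/
lemma cover_exists [Fintype V] [DecidableEq V] (G : SimpleGraph V)
    (hqu : ∀ (u' v' : V) (p : G.Walk u' u') (q : G.Walk v' v'), p.IsCycle → q.IsCycle →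
      G.Reachable u' v' → p.edges.toFinset = q.edges.toFinset) :
    ∃ f : V → Sym2 V, (∀ v, v ∈ f v) ∧ ∀ ⦃x y : V⦄, G.Adj x y → ∃ v, f v = s(x, y) := by
  classical
  generalize hn : G.edgeSet.ncard = n
  induction n using Nat.strong_induction_on generalizing G with
  | _ n ih =>
  by_cases hE : ∀ x y : V, ¬ G.Adj x y
  · refine ⟨fun v => s(v, v), fun v => by simp, fun x y hxy => absurd hxy (hE x y)⟩
  push_neg at hE
  obtain ⟨a, b, hab⟩ := hE
  by_cases hleaf : ∃ (v z : V), G.Adj v z ∧ ∀ z', G.Adj v z' → z' = z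
  · -- leaf case
    obtain ⟨v, z, hvz, huniq⟩ := hleaf
    set e : Sym2 V := s(v, z) with hedef
    set G' := G.deleteEdges {e} with hG'def
    have hG'le : G' ≤ G := G.deleteEdges_le _
    have hqu' := qu_transfer hG'le hqu
    have hcard : G'.edgeSet.ncard < n := by
      rw [← hn, hG'def, edgeSet_deleteEdges]
      exact Set.ncard_diff_singleton_lt_of_mem (G.mem_edgeSet.mpr hvz) (Set.toFinite _)
    obtain ⟨f', hsel', hcov'⟩ := ih _ hcard G' hqu' rfl
    refine ⟨Function.update f' v e, ?_, ?_⟩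
    · intro v'
      by_cases hv' : v' = v
      · subst hv'; rw [Function.update_self, hedef]; simp
      · rw [Function.update_of_ne hv']; exact hsel' v'
    · intro x y hxy
      by_cases hcaseE : s(x, y) = e
      · exact ⟨v, by rw [Function.update_self]; exact hcaseE.symm⟩
      · have hxy' : G'.Adj x y := by
          rw [hG'def, deleteEdges_adj]
          exact ⟨hxy, by simpa using hcaseE⟩
        obtain ⟨w', hw'⟩ := hcov' hxy'
        have hw'ne : w' ≠ v := by
          rintro rfl
          have hmem := hsel' w'
          rw [hw'] at hmem
          rcases Sym2.mem_iff.mp hmem with rfl | rfl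
          · exact hcaseE (by rw [huniq y hxy])
          · exact hcaseE (by rw [huniq x hxy.symm, Sym2.eq_swap])
        exact ⟨w', by rw [Function.update_of_ne hw'ne]; exact hw'⟩
  · -- no leaf: there is a cycle whose component is itself
    push_neg at hleaf
    have hdeg : ∀ (v t : V), G.Adj v t → ∃ t', t' ≠ t ∧ G.Adj v t' := by
      intro v t hvt
      obtain ⟨z', hz', hne⟩ := hleaf v t hvt
      exact ⟨z', hne, hz'⟩
    obtain ⟨y₀, c, hc⟩ := exists_cycle' hdeg hab
    set G' := G.deleteEdges {e | e ∈ c.edges} with hG'def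
    have hG'le : G' ≤ G := G.deleteEdges_le _
    have hqu' := qu_transfer hG'le hqu
    obtain ⟨e_c, he_c⟩ := List.exists_mem_of_ne_nil c.edges (cycle_edges_ne_nil hc)
    have hcard : G'.edgeSet.ncard < n := by
      rw [← hn, hG'def, edgeSet_deleteEdges]
      apply Set.ncard_lt_ncard _ (Set.toFinite _)
      rw [Set.ssubset_iff_subset_ne]
      refine ⟨Set.diff_subset, ?_⟩
      intro heq
      have hcmem : e_c ∈ G.edgeSet \ {e | e ∈ c.edges} := by
        rw [heq]; exact c.edges_subset_edgeSet he_c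
      exact hcmem.2 he_c
    obtain ⟨f', hsel', hcov'⟩ := ih _ hcard G' hqu' rfl
    have huniqd : ∀ d₁ ∈ c.darts, ∀ d₂ ∈ c.darts, d₁.fst = d₂.fst → d₁ = d₂ := by
      have hnodup : (c.darts.map (fun d => d.fst)).Nodup := by
        rw [c.map_fst_darts]; exact cycle_dropLast_nodup hc
      exact fun d₁ h₁ d₂ h₂ h => List.inj_on_of_nodup_map hnodup h₁ h₂ h
    set F : V → Sym2 V := fun x =>
      if hx : ∃ d, d ∈ c.darts ∧ d.fst = x then hx.choose.edge else f' x with hFdef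
    have hFpos : ∀ (d : G.Dart), d ∈ c.darts → F d.fst = d.edge := by
      intro d hd
      have hx : ∃ d', d' ∈ c.darts ∧ d'.fst = d.fst := ⟨d, hd, rfl⟩
      rw [hFdef]
      simp only [dif_pos hx]
      rw [huniqd _ hx.choose_spec.1 _ hd hx.choose_spec.2]
    have hFneg : ∀ x : V, ¬ (∃ d, d ∈ c.darts ∧ d.fst = x) → F x = f' x := by
      intro x hx
      rw [hFdef]; simp only [dif_neg hx]
    refine ⟨F, ?_, ?_⟩
    · intro x
      by_cases hx : ∃ d, d ∈ c.darts ∧ d.fst = x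
      · rw [hFdef]
        simp only [dif_pos hx]
        set d := hx.choose with hdd
        have hfst : d.fst = x := hx.choose_spec.2
        clear_value d
        rw [← hfst, SimpleGraph.Dart.edge]
        exact Sym2.mem_mk_left _ _
      · rw [hFneg x hx]; exact hsel' x
    · intro x y hxy
      by_cases hin : s(x, y) ∈ c.edges
      · rw [Walk.edges] at hin
        obtain ⟨d, hd, hde⟩ := List.mem_map.mp hin
        exact ⟨d.fst, by rw [hFpos d hd]; exact hde⟩
      · have hxy' : G'.Adj x y := by
          rw [hG'def, deleteEdges_adj]
          exact ⟨hxy, by simpa using hin⟩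
        obtain ⟨w', hw'⟩ := hcov' hxy'
        refine ⟨w', ?_⟩
        rw [hFneg w' ?_]
        · exact hw'
        · rintro ⟨d, hd, rfl⟩
          have hsup : d.fst ∈ c.support := c.dart_fst_mem_support_of_mem_darts hd
          have hmem := hsel' d.fst
          rw [hw'] at hmem
          rcases Sym2.mem_iff.mp hmem with heq | heq
          · refine no_extra_edge hqu hdeg hc hsup (z := y) ?_ ?_
            · rw [heq]; exact hxy
            · rw [heq]; exact hin
          · refine no_extra_edge hqu hdeg hc hsup (z := x) ?_ ?_
            · rw [heq]; exact hxy.symm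
            · rw [heq, Sym2.eq_swap]; exact hin
end RobustAux

end RobustAuxSection

/-- A finite (nonempty) graph `G` has `χ₁(G) = 1` iff it is quasi-unicyclic;
in particular every tree has `χ₁ = 1`. -/
theorem robustChromNum_eq_one_iff_quasiUnicyclic
    (V : Type) [Fintype V] [DecidableEq V] [Nonempty V] (G : SimpleGraph V) :
    (robustChromNum G = 1 ↔ QuasiUnicyclic G) ∧
      (G.IsTree → robustChromNum G = 1) := by
  classical
  have hchrom_pos : ∀ H : SimpleGraph V, 1 ≤ chromNum H := by
    intro H
    rw [Nat.one_le_iff_ne_zero]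
    intro h0
    have hne : {n : ℕ | H.Colorable n}.Nonempty := ⟨Fintype.card V, H.colorable_of_fintype⟩
    have hmem : chromNum H ∈ {n : ℕ | H.Colorable n} := Nat.sInf_mem hne
    rw [h0] at hmem
    obtain ⟨C⟩ := hmem
    exact (C (Classical.arbitrary V)).elim0
  have hchrom_edgeless : ∀ H : SimpleGraph V, (∀ x y, ¬H.Adj x y) → chromNum H = 1 := by
    intro H hH
    have h1 : H.Colorable 1 :=
      ⟨SimpleGraph.Coloring.mk (fun _ => 0) (fun {a b} hab => absurd hab (hH a b))⟩
    exact le_antisymm (Nat.sInf_le h1) (hchrom_pos H)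
  have hchrom_one : ∀ H : SimpleGraph V, chromNum H = 1 → ∀ x y, ¬H.Adj x y := by
    intro H h1 x y hxy
    have hne : {n : ℕ | H.Colorable n}.Nonempty := ⟨Fintype.card V, H.colorable_of_fintype⟩
    have hmem : chromNum H ∈ {n : ℕ | H.Colorable n} := Nat.sInf_mem hne
    rw [h1] at hmem
    obtain ⟨C⟩ := hmem
    exact (C.valid hxy) (Subsingleton.elim _ _)
  have hmain : robustChromNum G = 1 ↔
      ∃ f : V → Sym2 V, IsOneSelection G f ∧ ∀ ⦃x y : V⦄, G.Adj x y → ∃ v, f v = s(x, y) := by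
    constructor
    · intro h1
      have hRne : {m : ℕ | ∃ f : V → Sym2 V, IsOneSelection G f ∧
          chromNum (oneRemoved G f) = m}.Nonempty :=
        ⟨chromNum (oneRemoved G (fun v => s(v, v))), fun v => s(v, v),
          fun v => by simp, rfl⟩
      have hmem : robustChromNum G ∈ {m : ℕ | ∃ f : V → Sym2 V, IsOneSelection G f ∧
          chromNum (oneRemoved G f) = m} := Nat.sInf_mem hRne
      rw [h1] at hmem
      obtain ⟨f, hfsel, hf1⟩ := hmem
      refine ⟨f, hfsel, ?_⟩
      intro x y hxy
      by_contra hno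
      push_neg at hno
      have hadj : (oneRemoved G f).Adj x y := by
        rw [oneRemoved, SimpleGraph.deleteEdges_adj]
        exact ⟨hxy, by rintro ⟨v, hv⟩; exact hno v hv⟩
      exact hchrom_one _ hf1 x y hadj
    · rintro ⟨f, hfsel, hfcov⟩
      have hedgeless : ∀ x y, ¬ (oneRemoved G f).Adj x y := by
        intro x y hxy
        rw [oneRemoved, SimpleGraph.deleteEdges_adj] at hxy
        obtain ⟨v, hv⟩ := hfcov hxy.1
        exact hxy.2 ⟨v, hv⟩
      have h1 : (1 : ℕ) ∈ {m : ℕ | ∃ f : V → Sym2 V, IsOneSelection G f ∧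
          chromNum (oneRemoved G f) = m} :=
        ⟨f, hfsel, hchrom_edgeless _ hedgeless⟩
      refine le_antisymm (Nat.sInf_le h1) ?_
      by_contra hlt
      push_neg at hlt
      have h0 : robustChromNum G = 0 := by omega
      have hmem : robustChromNum G ∈ {m : ℕ | ∃ f : V → Sym2 V, IsOneSelection G f ∧
          chromNum (oneRemoved G f) = m} := Nat.sInf_mem ⟨1, h1⟩
      rw [h0] at hmem
      obtain ⟨f0, _, hc0⟩ := hmem
      have := hchrom_pos (oneRemoved G f0)
      omega
  have hiff : robustChromNum G = 1 ↔ QuasiUnicyclic G := by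
    rw [hmain]
    constructor
    · rintro ⟨f, hsel, hcov⟩ u v p q hp hq hr
      by_contra hne
      have hex : ∃ e, (e ∈ q.edges ∧ e ∉ p.edges) ∨ (e ∈ p.edges ∧ e ∉ q.edges) := by
        by_contra hno
        push_neg at hno
        apply hne
        ext e
        simp only [List.mem_toFinset]
        obtain ⟨h1, h2⟩ := hno e
        exact ⟨h2, h1⟩
      obtain ⟨e, he⟩ := hex
      rcases he with ⟨h1, h2⟩ | ⟨h1, h2⟩
      · exact RobustAux.cover_qu hsel hcov hp hq hr h1 h2
      · exact RobustAux.cover_qu hsel hcov hq hp hr.symm h1 h2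
    · intro hqu
      obtain ⟨f, hsel, hcov⟩ := RobustAux.cover_exists G hqu
      exact ⟨f, hsel, hcov⟩
  refine ⟨hiff, fun hT => hiff.mpr ?_⟩
  intro u v p q hp hq hr
  exact absurd hp (hT.IsAcyclic p)
end
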